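/- arXiv:1805.09247 — 4 statements merged into one kernel-verified Lean document; each statement's English description precedes it below -/
import Mathlib

section
/- Let a ≥ 0 and b ≥ 1 be real constants and let X, Y be integrable real random variables on a common probability space such that P( X ≥ Y + √(a·log(b/δ)) ) ≤ δ for all δ ∈ (0,1). Then E[X] ≤ E[Y] + √(a·(1 + log b)). -/
open MeasureTheory

section Helpers
open Set Real

lemma neg_log_le_aux {s : ℝ} (hs0 : 0 < s) : -Real.log s ≤ 2 * s ^ (-(1:ℝ)/2) := by
  have hsq : 0 < Real.sqrt s := Real.sqrt_pos.2 hs0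
  have h1 : Real.log ((Real.sqrt s)⁻¹) ≤ (Real.sqrt s)⁻¹ - 1 :=
    Real.log_le_sub_one_of_pos (by positivity)
  have h2 : Real.log ((Real.sqrt s)⁻¹) = -(1/2) * Real.log s := by
    rw [Real.log_inv, Real.log_sqrt hs0.le]; ring
  have h3 : s ^ (-(1:ℝ)/2) = (Real.sqrt s)⁻¹ := by
    rw [Real.sqrt_eq_rpow, ← Real.rpow_neg hs0.le]; norm_num
  rw [h3]
  nlinarith [h1, h2, hsq]

lemma neg_log_integrableOn : IntegrableOn (fun s : ℝ => -Real.log s) (Ioo 0 1) := by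
  have hmono : IntegrableOn (fun s : ℝ => 2 * s ^ (-(1:ℝ)/2)) (Ioo 0 1) := by
    have h := (intervalIntegral.intervalIntegrable_rpow' (r := (-(1:ℝ)/2)) (by norm_num : (-1:ℝ) < -(1:ℝ)/2)
      (a := 0) (b := 1)).const_mul 2
    rw [intervalIntegrable_iff, uIoc_of_le zero_le_one] at h
    exact h.mono_set Ioo_subset_Ioc_self
  refine hmono.mono' (Real.measurable_log.neg).aestronglyMeasurable ?_
  filter_upwards [ae_restrict_mem measurableSet_Ioo] with s hs
  rw [Real.norm_eq_abs, abs_of_nonneg (neg_nonneg.2 (Real.log_nonpos hs.1.le hs.2.le))]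
  exact neg_log_le_aux hs.1

lemma integral_neg_log : ∫ s in Ioo (0:ℝ) 1, -Real.log s = 1 := by
  rw [Integrable.integral_eq_integral_meas_lt neg_log_integrableOn ?_]
  · have heq : ∫ t in Ioi (0:ℝ), ((volume.restrict (Ioo 0 1)) {s : ℝ | t < -Real.log s}).toReal
        = ∫ t in Ioi (0:ℝ), Real.exp (-t) := by
      apply setIntegral_congr_fun measurableSet_Ioi
      intro t ht
      have hset : {s : ℝ | t < -Real.log s} ∩ Ioo 0 1 = Ioo 0 (Real.exp (-t)) := by
        ext s
        simp only [mem_inter_iff, mem_setOf_eq, mem_Ioo]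
        constructor
        · rintro ⟨h1, h2, h3⟩
          exact ⟨h2, by rwa [← Real.log_lt_iff_lt_exp h2, lt_neg]⟩
        · rintro ⟨h1, h2⟩
          have h3 : s < 1 := h2.trans_le (Real.exp_le_one_iff.2 (by linarith [mem_Ioi.1 ht]))
          refine ⟨?_, h1, h3⟩
          rw [lt_neg, Real.log_lt_iff_lt_exp h1]; exact h2
      simp only []
      rw [Measure.restrict_apply (t := {s : ℝ | t < -Real.log s}) (measurableSet_lt measurable_const Real.measurable_log.neg),
        hset, Real.volume_Ioo, sub_zero, ENNReal.toReal_ofReal (Real.exp_pos _).le]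
    simp only [measureReal_def]
    rw [heq, integral_exp_neg_Ioi, neg_zero, Real.exp_zero]
  · filter_upwards [ae_restrict_mem measurableSet_Ioo] with s hs
    exact neg_nonneg.2 (Real.log_nonpos hs.1.le hs.2.le)

lemma lemC {a b : ℝ} (ha : 0 < a) (hb : 1 ≤ b) :
    ∫ s in Ioo (0:ℝ) 1, Real.sqrt (a * Real.log (b / s))
      ≤ Real.sqrt (a * (1 + Real.log b)) := by
  set c := Real.sqrt (a * (1 + Real.log b)) with hc
  have hLb : 0 ≤ Real.log b := Real.log_nonneg hb
  have hc2 : c ^ 2 = a * (1 + Real.log b) := Real.sq_sqrt (by positivity)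
  have hcpos : 0 < c := Real.sqrt_pos.2 (by positivity)
  have hb0 : 0 < b := lt_of_lt_of_le one_pos hb
  -- the majorant
  set g : ℝ → ℝ := fun s => (a * Real.log b + c^2) / (2*c) + (a/(2*c)) * (-Real.log s) with hg
  have hgint : IntegrableOn g (Ioo (0:ℝ) 1) :=
    (integrableOn_const (by simp)).add (neg_log_integrableOn.const_mul _)
  have hmono : ∀ s ∈ Ioo (0:ℝ) 1, Real.sqrt (a * Real.log (b / s)) ≤ g s := by
    intro s hs
    have hlog : Real.log (b / s) = Real.log b + (-Real.log s) := by
      rw [Real.log_div hb0.ne' hs.1.ne']; ring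
    have hlognn : 0 ≤ Real.log (b / s) := by
      rw [hlog]
      have := Real.log_nonpos hs.1.le hs.2.le
      linarith
    have hx : 0 ≤ a * Real.log (b / s) := by positivity
    have hsq := Real.sq_sqrt hx
    have hsqnn := Real.sqrt_nonneg (a * Real.log (b / s))
    have hgs : g s = (a * Real.log (b / s) + c^2) / (2*c) := by
      rw [hg]; simp only; rw [hlog]; field_simp; ring
    have key : 0 ≤ (Real.sqrt (a * Real.log (b / s)) - c)^2 := sq_nonneg _
    rw [hgs, le_div_iff₀ (by positivity)]
    nlinarith [key, hsq]
  have hstep : ∫ s in Ioo (0:ℝ) 1, Real.sqrt (a * Real.log (b / s))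
      ≤ ∫ s in Ioo (0:ℝ) 1, g s := by
    apply integral_mono_of_nonneg
    · exact Filter.Eventually.of_forall fun s => Real.sqrt_nonneg _
    · exact hgint
    · filter_upwards [ae_restrict_mem measurableSet_Ioo] with s hs using hmono s hs
  refine hstep.trans ?_
  rw [hg]
  beta_reduce
  rw [integral_add (integrableOn_const (by simp) : Integrable (fun _ : ℝ => (a * Real.log b + c^2) / (2*c)) (volume.restrict (Ioo (0:ℝ) 1))) (neg_log_integrableOn.const_mul (a/(2*c)) : Integrable (fun s : ℝ => a/(2*c) * -Real.log s) (volume.restrict (Ioo (0:ℝ) 1)))]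
  rw [integral_const, integral_const_mul, integral_neg_log]
  simp only [measureReal_def, MeasurableSet.univ, Measure.restrict_apply, univ_inter, Real.volume_Ioo, sub_zero,
    ENNReal.ofReal_one, ENNReal.toReal_one, smul_eq_mul, one_smul, mul_one]
  apply le_of_eq
  field_simp
  linear_combination (-1 : ℝ) * hc2

lemma minGaussInt {a b : ℝ} (ha : 0 < a) (hb0 : 0 < b) :
    IntegrableOn (fun t : ℝ => min 1 (b * Real.exp (-(t^2)/a))) (Ioi (0:ℝ)) := by
  have hdom : Integrable (fun t : ℝ => b * Real.exp (-(1/a) * t^2)) :=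
    (integrable_exp_neg_mul_sq (by positivity)).const_mul b
  refine (hdom.integrableOn).mono' ?_ ?_
  · exact (continuous_const.min
      (continuous_const.mul (Real.continuous_exp.comp (by fun_prop)))).aestronglyMeasurable
  · filter_upwards with t
    rw [Real.norm_eq_abs, abs_of_nonneg (le_min zero_le_one (by positivity))]
    refine (min_le_right _ _).trans (le_of_eq ?_)
    congr 1
    ring_nf

lemma lemD {a b : ℝ} (ha : 0 < a) (hb : 1 ≤ b) :
    ∫ t in Ioi (0:ℝ), min 1 (b * Real.exp (-(t^2)/a))
      ≤ Real.sqrt (a * (1 + Real.log b)) := by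
  have hb0 : 0 < b := lt_of_lt_of_le one_pos hb
  set g : ℝ → ℝ := fun t => min 1 (b * Real.exp (-(t^2)/a)) with hgdef
  have hgcont : Continuous g := by
    apply continuous_const.min
    exact continuous_const.mul (Real.continuous_exp.comp (by fun_prop))
  have hgnn : ∀ t, 0 ≤ g t := fun t => le_min zero_le_one (by positivity)
  have hdom : Integrable (fun t : ℝ => b * Real.exp (-(1/a) * t^2)) :=
    (integrable_exp_neg_mul_sq (by positivity)).const_mul b
  have hgint : IntegrableOn g (Ioi (0:ℝ)) := minGaussInt ha hb0
  have hmeas : ∀ s : ℝ, MeasurableSet {t : ℝ | s < g t} :=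
    fun s => (isOpen_lt continuous_const hgcont).measurableSet
  rw [Integrable.integral_eq_integral_meas_lt hgint
    (Filter.Eventually.of_forall fun t => hgnn t)]
  have hcong : ∫ s in Ioi (0:ℝ), ((volume.restrict (Ioi 0)) {t : ℝ | s < g t}).toReal
      = ∫ s in Ioi (0:ℝ), (Ioo (0:ℝ) 1).indicator
          (fun s => Real.sqrt (a * Real.log (b / s))) s := by
    apply setIntegral_congr_fun measurableSet_Ioi
    intro s hs
    have hs0 : (0:ℝ) < s := hs
    by_cases hs1 : s < 1
    · have hset : {t : ℝ | s < g t} ∩ Ioi 0 = Ioo 0 (Real.sqrt (a * Real.log (b / s))) := by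
        ext t
        simp only [mem_inter_iff, mem_setOf_eq, mem_Ioi, mem_Ioo, hgdef, lt_min_iff]
        constructor
        · rintro ⟨⟨_, h2⟩, ht0⟩
          refine ⟨ht0, ?_⟩
          rw [Real.lt_sqrt ht0.le]
          have : s / b < Real.exp (-(t^2)/a) := by
            rw [div_lt_iff₀ hb0] at *
            linarith [mul_comm b (Real.exp (-(t^2)/a))]
          rw [← Real.log_lt_iff_lt_exp (by positivity)] at this
          rw [Real.log_div hs0.ne' hb0.ne', lt_div_iff₀ ha] at this
          rw [Real.log_div hb0.ne' hs0.ne']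
          nlinarith [this]
        · rintro ⟨ht0, ht⟩
          rw [Real.lt_sqrt ht0.le] at ht
          refine ⟨⟨hs1, ?_⟩, ht0⟩
          have hlt : Real.log (s / b) < -(t^2)/a := by
            rw [Real.log_div hs0.ne' hb0.ne', lt_div_iff₀ ha]
            rw [Real.log_div hb0.ne' hs0.ne'] at ht
            nlinarith [ht]
          rw [Real.log_lt_iff_lt_exp (by positivity)] at hlt
          rw [div_lt_iff₀ hb0] at hlt
          linarith [mul_comm (Real.exp (-(t^2)/a)) b]
      simp only []
      rw [Measure.restrict_apply (hmeas s), hset, Real.volume_Ioo, sub_zero,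
        ENNReal.toReal_ofReal (Real.sqrt_nonneg _)]
      rw [Set.indicator_of_mem (mem_Ioo.2 ⟨hs0, hs1⟩)]
    · have hset : {t : ℝ | s < g t} = ∅ := by
        ext t
        simp only [mem_setOf_eq, mem_empty_iff_false, iff_false, not_lt, hgdef]
        exact (min_le_left _ _).trans (not_lt.1 hs1)
      simp only []
      rw [Measure.restrict_apply (hmeas s), hset, empty_inter, measure_empty,
        ENNReal.toReal_zero]
      rw [Set.indicator_of_notMem (fun hmem => hs1 (mem_Ioo.1 hmem).2)]
  simp only [measureReal_def]
  rw [hcong, integral_indicator measurableSet_Ioo,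
    Measure.restrict_restrict measurableSet_Ioo]
  have : Ioo (0:ℝ) 1 ∩ Ioi 0 = Ioo 0 1 := by
    ext x; simp only [mem_inter_iff, mem_Ioo, mem_Ioi]; tauto
  rw [this]
  exact lemC ha hb

end Helpers

open Set Real in
theorem stmt10
    {Ω : Type*} {mΩ : MeasurableSpace Ω} (μ : Measure Ω) [IsProbabilityMeasure μ]
    (a b : ℝ) (ha : 0 ≤ a) (hb : 1 ≤ b)
    (X Y : Ω → ℝ) (hX : Integrable X μ) (hY : Integrable Y μ)
    (h : ∀ δ ∈ Set.Ioo (0 : ℝ) 1,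
      μ {ω | Y ω + Real.sqrt (a * Real.log (b / δ)) ≤ X ω} ≤ ENNReal.ofReal δ) :
    ∫ ω, X ω ∂μ ≤ (∫ ω, Y ω ∂μ) + Real.sqrt (a * (1 + Real.log b)) := by
  rcases eq_or_lt_of_le ha with haz | hapos
  · -- a = 0
    subst haz
    have hS : μ {ω | Y ω ≤ X ω} = 0 := by
      by_contra hne
      set m := (μ {ω | Y ω ≤ X ω}).toReal with hm
      have hfin : μ {ω | Y ω ≤ X ω} ≠ ⊤ := measure_ne_top μ _
      have hmpos : 0 < m := ENNReal.toReal_pos hne hfin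
      set δ := min (m/2) (1/2) with hδ
      have hδmem : δ ∈ Set.Ioo (0:ℝ) 1 := ⟨lt_min (by linarith) (by norm_num),
        lt_of_le_of_lt (min_le_right _ _) (by norm_num)⟩
      have := h δ hδmem
      simp only [zero_mul, Real.sqrt_zero, add_zero] at this
      have hlt : ENNReal.ofReal δ < μ {ω | Y ω ≤ X ω} := by
        rw [← ENNReal.ofReal_toReal hfin, ← hm]
        exact ENNReal.ofReal_lt_ofReal_iff_of_nonneg (le_of_lt hδmem.1) |>.2
          (lt_of_le_of_lt (min_le_left _ _) (by linarith))
      exact absurd this (not_le.2 hlt)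
    have hae : X ≤ᵐ[μ] Y := by
      rw [Filter.EventuallyLE, ae_iff]
      refine measure_mono_null ?_ hS
      intro ω hω
      simp only [Set.mem_setOf_eq, not_le] at hω ⊢
      exact hω.le
    have : ∫ ω, X ω ∂μ ≤ ∫ ω, Y ω ∂μ := integral_mono_ae hX hY hae
    simpa using this
  · -- 0 < a
    have hb0 : (0:ℝ) < b := lt_of_lt_of_le one_pos hb
    set Zp : Ω → ℝ := fun ω => max (X ω - Y ω) 0 with hZp
    have hZpint : Integrable Zp μ := (hX.sub hY).pos_part
    have hkey : ∫ ω, Zp ω ∂μ ≤ Real.sqrt (a * (1 + Real.log b)) := by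
      rw [Integrable.integral_eq_integral_meas_lt hZpint
        (Filter.Eventually.of_forall fun ω => le_max_right _ _)]
      refine le_trans ?_ (lemD hapos hb)
      apply integral_mono_of_nonneg
        (Filter.Eventually.of_forall fun t => ENNReal.toReal_nonneg)
        (minGaussInt hapos hb0)
      filter_upwards [ae_restrict_mem measurableSet_Ioi] with t ht
      have hle1 : (μ {ω | t < Zp ω}).toReal ≤ 1 := by
        rw [← ENNReal.toReal_one]
        exact ENNReal.toReal_mono ENNReal.one_ne_top prob_le_one
      refine le_min hle1 ?_
      by_cases hcase : b * Real.exp (-(t^2)/a) < 1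
      · set δ := b * Real.exp (-(t^2)/a) with hδ
        have hδpos : 0 < δ := by positivity
        have hsqrt : Real.sqrt (a * Real.log (b / δ)) = t := by
          have hlogδ : Real.log δ = Real.log b + (-(t^2)/a) := by
            rw [hδ, Real.log_mul hb0.ne' (Real.exp_pos _).ne', Real.log_exp]
          rw [Real.log_div hb0.ne' hδpos.ne', hlogδ]
          have : a * (Real.log b - (Real.log b + -(t^2)/a)) = t^2 := by
            field_simp
            ring
          rw [this, Real.sqrt_sq (le_of_lt ht)]
        have hsub : {ω | t < Zp ω} ⊆ {ω | Y ω + Real.sqrt (a * Real.log (b / δ)) ≤ X ω} := by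
          intro ω hω
          simp only [Set.mem_setOf_eq, hZp, lt_max_iff] at hω
          have : t < X ω - Y ω := by
            rcases hω with h1 | h2
            · exact h1
            · exact absurd h2 (not_lt.2 (le_of_lt ht))
          simp only [Set.mem_setOf_eq, hsqrt]
          linarith
        calc (μ {ω | t < Zp ω}).toReal
            ≤ (μ {ω | Y ω + Real.sqrt (a * Real.log (b / δ)) ≤ X ω}).toReal :=
              ENNReal.toReal_mono (measure_ne_top μ _) (measure_mono hsub)
          _ ≤ (ENNReal.ofReal δ).toReal :=
              ENNReal.toReal_mono ENNReal.ofReal_ne_top (h δ ⟨hδpos, hcase⟩)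
          _ = δ := ENNReal.toReal_ofReal hδpos.le
      · exact hle1.trans (not_lt.1 hcase)
    have hsub : ∫ ω, (X ω - Y ω) ∂μ ≤ ∫ ω, Zp ω ∂μ :=
      integral_mono (hX.sub hY) hZpint fun ω => le_max_left _ _
    rw [integral_sub hX hY] at hsub
    linarith [hkey, hsub]
end

section
/- Let b ≥ 1 and let Λ be a positive real random variable satisfying P(Λ ≤ δ) ≤ δ for all δ ∈ (0,1). Then E[ √( max(log(b/Λ), 0) ) ] ≤ √(1 + log b). -/
open MeasureTheory Real Set ENNReal

lemma key_step
    {Ω : Type*} {mΩ : MeasurableSpace Ω} (μ : Measure Ω) [IsProbabilityMeasure μ]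
    (b : ℝ) (hb : 1 ≤ b)
    (Λ : Ω → ℝ) (hΛmeas : Measurable Λ) (hΛpos : ∀ ω, 0 < Λ ω)
    (hsu : ∀ δ ∈ Set.Ioo (0 : ℝ) 1, μ {ω | Λ ω ≤ δ} ≤ ENNReal.ofReal δ) :
    ∫⁻ ω, ENNReal.ofReal (max (Real.log (b / Λ ω)) 0) ∂μ
      ≤ ENNReal.ofReal (1 + Real.log b) := by
  have hb0 : (0:ℝ) < b := lt_of_lt_of_le one_pos hb
  have hL0 : 0 ≤ Real.log b := Real.log_nonneg hb
  set f : Ω → ℝ := fun ω => max (Real.log (b / Λ ω)) 0 with hf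
  have f_nn : 0 ≤ᵐ[μ] f := Filter.Eventually.of_forall fun ω => le_max_right _ _
  have f_mble : AEMeasurable f μ :=
    ((Real.measurable_log.comp ((measurable_const.div hΛmeas))).max measurable_const).aemeasurable
  rw [lintegral_eq_lintegral_meas_lt μ f_nn f_mble]
  -- bound the tail
  have tail_bd : ∀ t ∈ Ioi (0:ℝ), μ {a | t < f a} ≤
      (Ioc (0:ℝ) (Real.log b)).indicator (fun _ => 1) t
        + (Ioi (Real.log b)).indicator (fun t => ENNReal.ofReal (b * Real.exp (-t))) t := by
    intro t ht
    simp only [mem_Ioi] at ht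
    by_cases hcase : t ≤ Real.log b
    · have hmem : t ∈ Ioc (0:ℝ) (Real.log b) := ⟨ht, hcase⟩
      rw [Set.indicator_of_mem hmem]
      exact le_add_right prob_le_one
    · push_neg at hcase
      have h1 : (Ioc (0:ℝ) (Real.log b)).indicator (fun _ => (1:ℝ≥0∞)) t = 0 :=
        Set.indicator_of_notMem (fun h => absurd h.2 (not_le.mpr hcase)) _
      have h2 : (Ioi (Real.log b)).indicator (fun t => ENNReal.ofReal (b * Real.exp (-t))) t
          = ENNReal.ofReal (b * Real.exp (-t)) := Set.indicator_of_mem hcase _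
      rw [h1, h2, zero_add]
      have hδ : b * Real.exp (-t) ∈ Set.Ioo (0:ℝ) 1 := by
        constructor
        · positivity
        · rw [← Real.exp_log hb0, ← Real.exp_add]
          calc Real.exp (Real.log b + -t) < Real.exp 0 := by
                apply Real.exp_lt_exp.mpr; linarith
            _ = 1 := Real.exp_zero
      calc μ {a | t < f a} ≤ μ {ω | Λ ω ≤ b * Real.exp (-t)} := by
            apply measure_mono
            intro a ha
            simp only [Set.mem_setOf_eq, hf] at ha ⊢
            have ht' : t < Real.log (b / Λ a) := by
              rcases max_cases (Real.log (b / Λ a)) 0 with ⟨h, _⟩ | ⟨h, _⟩ <;> simp [h] at ha <;> linarith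
            have hlt := Real.exp_lt_exp.mpr ht'
            have hΛa := hΛpos a
            rw [Real.exp_log (div_pos hb0 hΛa), lt_div_iff₀ hΛa] at hlt
            have h3 : Real.exp t * Real.exp (-t) = 1 := by
              rw [← Real.exp_add]; simp
            nlinarith [mul_lt_mul_of_pos_right hlt (Real.exp_pos (-t)), h3]
        _ ≤ ENNReal.ofReal (b * Real.exp (-t)) := hsu _ hδ
  calc ∫⁻ t in Ioi 0, μ {a | t < f a}
      ≤ ∫⁻ t in Ioi (0:ℝ), ((Ioc (0:ℝ) (Real.log b)).indicator (fun _ => 1) t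
        + (Ioi (Real.log b)).indicator (fun t => ENNReal.ofReal (b * Real.exp (-t))) t) := by
        apply setLIntegral_mono' measurableSet_Ioi tail_bd
    _ ≤ ∫⁻ t, ((Ioc (0:ℝ) (Real.log b)).indicator (fun _ => 1) t
        + (Ioi (Real.log b)).indicator (fun t => ENNReal.ofReal (b * Real.exp (-t))) t) :=
        setLIntegral_le_lintegral _ _
    _ = (volume (Ioc (0:ℝ) (Real.log b)))
        + ∫⁻ t in Ioi (Real.log b), ENNReal.ofReal (b * Real.exp (-t)) := by
        rw [lintegral_add_left]
        · rw [lintegral_indicator measurableSet_Ioc, setLIntegral_const, one_mul,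
            lintegral_indicator measurableSet_Ioi]
        · exact (measurable_const.indicator measurableSet_Ioc)
    _ = ENNReal.ofReal (Real.log b) + ENNReal.ofReal 1 := by
        congr 1
        · rw [Real.volume_Ioc, sub_zero]
        · rw [← ofReal_integral_eq_lintegral_ofReal]
          · rw [MeasureTheory.integral_const_mul, integral_exp_neg_Ioi, ← Real.exp_log hb0,
              ← Real.exp_add]
            simp
          · simpa using (exp_neg_integrableOn_Ioi (Real.log b) one_pos).const_mul b
          · exact Filter.Eventually.of_forall fun x => by positivity
    _ = ENNReal.ofReal (1 + Real.log b) := by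
        rw [← ENNReal.ofReal_add hL0 zero_le_one, add_comm]

theorem stmt11
    {Ω : Type*} {mΩ : MeasurableSpace Ω} (μ : Measure Ω) [IsProbabilityMeasure μ]
    (b : ℝ) (hb : 1 ≤ b)
    (Λ : Ω → ℝ) (hΛmeas : Measurable Λ) (hΛpos : ∀ ω, 0 < Λ ω)
    (hsu : ∀ δ ∈ Set.Ioo (0 : ℝ) 1, μ {ω | Λ ω ≤ δ} ≤ ENNReal.ofReal δ) :
    ∫⁻ ω, ENNReal.ofReal (Real.sqrt (max (Real.log (b / Λ ω)) 0)) ∂μ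
      ≤ ENNReal.ofReal (Real.sqrt (1 + Real.log b)) := by
  have hb0 : (0:ℝ) < b := lt_of_lt_of_le one_pos hb
  have hL0 : 0 ≤ Real.log b := Real.log_nonneg hb
  set g : Ω → ℝ≥0∞ := fun ω => ENNReal.ofReal (Real.sqrt (max (Real.log (b / Λ ω)) 0)) with hg
  have hgm : AEMeasurable g μ := by
    apply Measurable.aemeasurable
    exact ENNReal.measurable_ofReal.comp (Real.continuous_sqrt.measurable.comp
      ((Real.measurable_log.comp (measurable_const.div hΛmeas)).max measurable_const))
  have hpq : Real.HolderConjugate 2 2 := Real.HolderConjugate.two_two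
  have hCS := ENNReal.lintegral_mul_le_Lp_mul_Lq μ hpq hgm (aemeasurable_const (b := (1:ℝ≥0∞)))
  simp only [Pi.mul_apply, mul_one, ENNReal.one_rpow, lintegral_const, measure_univ, one_mul] at hCS
  have hsq : ∀ ω, g ω ^ (2:ℝ) = ENNReal.ofReal (max (Real.log (b / Λ ω)) 0) := by
    intro ω
    rw [hg]
    rw [ENNReal.ofReal_rpow_of_nonneg (Real.sqrt_nonneg _) (by norm_num)]
    congr 1
    rw [show ((2:ℝ)) = ((2:ℕ):ℝ) by norm_num, Real.rpow_natCast,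
      Real.sq_sqrt (le_max_right _ _)]
  calc ∫⁻ ω, g ω ∂μ ≤ (∫⁻ ω, g ω ^ (2:ℝ) ∂μ) ^ ((1:ℝ)/2) := hCS
    _ ≤ (ENNReal.ofReal (1 + Real.log b)) ^ ((1:ℝ)/2) := by
        apply ENNReal.rpow_le_rpow _ (by norm_num)
        simp_rw [hsq]
        exact key_step μ b hb Λ hΛmeas hΛpos hsu
    _ = ENNReal.ofReal (Real.sqrt (1 + Real.log b)) := by
        rw [ENNReal.ofReal_rpow_of_nonneg (by linarith) (by norm_num),
          ← Real.sqrt_eq_rpow]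
end

section
/- For every real number b ≥ 1: √(log b) + b·∫_{√(log b)}^∞ e^{−x²} dx ≤ √(1 + log b). -/
open Real MeasureTheory Set Filter Topology

noncomputable def Fa (x : ℝ) : ℝ := Real.exp (-(x^2)) * (x - Real.sqrt (x^2+1))

noncomputable def Fa' (x : ℝ) : ℝ :=
  Real.exp (-(x^2)) * ((-(2*x)) * (x - Real.sqrt (x^2+1)) + (1 - x / Real.sqrt (x^2+1)))

lemma spos (x : ℝ) : 0 < Real.sqrt (x^2+1) :=
  Real.sqrt_pos.2 (by positivity)

lemma ssq (x : ℝ) : Real.sqrt (x^2+1) ^ 2 = x^2+1 :=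
  Real.sq_sqrt (by positivity)

lemma hderivFa (x : ℝ) : HasDerivAt Fa (Fa' x) x := by
  have hs : HasDerivAt (fun x : ℝ => Real.sqrt (x^2+1)) (x / Real.sqrt (x^2+1)) x := by
    have h1 : HasDerivAt (fun x : ℝ => x^2+1) (2*x) x := by
      simpa using ((hasDerivAt_pow 2 x).add_const 1)
    have := (Real.hasDerivAt_sqrt (by positivity : (x^2+1) ≠ 0)).comp x h1
    refine this.congr_deriv ?_
    field_simp
  have he : HasDerivAt (fun x : ℝ => Real.exp (-(x^2))) (Real.exp (-(x^2)) * (-(2*x))) x := by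
    have h1 : HasDerivAt (fun x : ℝ => -(x^2)) (-(2*x)) x := by
      simpa using (hasDerivAt_pow 2 x).fun_neg
    exact h1.exp
  have hin : HasDerivAt (fun x : ℝ => x - Real.sqrt (x^2+1)) (1 - x / Real.sqrt (x^2+1)) x :=
    (hasDerivAt_id x).sub hs
  have := he.mul hin
  refine this.congr_deriv ?_
  unfold Fa'
  ring

lemma sub_bounds (x : ℝ) (hx : 0 ≤ x) :
    -1 ≤ x - Real.sqrt (x^2+1) ∧ x - Real.sqrt (x^2+1) ≤ 0 := by
  have hs := spos x
  have hsq := ssq x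
  constructor
  · nlinarith
  · nlinarith

lemma key (x : ℝ) (hx : 0 ≤ x) : Real.exp (-(x^2)) ≤ Fa' x := by
  unfold Fa'
  have hs := spos x
  have hsq := ssq x
  have h2xs : 2*x*Real.sqrt (x^2+1) ≤ 2*x^2+1 := by
    nlinarith [sq_nonneg (x - Real.sqrt (x^2+1))]
  have hdiv : x / Real.sqrt (x^2+1) ≤ 2*x*Real.sqrt (x^2+1) - 2*x^2 := by
    rw [div_le_iff₀ hs]
    nlinarith [mul_le_mul_of_nonneg_left h2xs hx]
  nth_rewrite 1 [show Real.exp (-(x^2)) = Real.exp (-(x^2)) * 1 by ring]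
  apply mul_le_mul_of_nonneg_left _ (Real.exp_pos _).le
  nlinarith

lemma tendstoFa : Tendsto Fa atTop (𝓝 0) := by
  have hexp : Tendsto (fun x : ℝ => Real.exp (-(x^2))) atTop (𝓝 0) := by
    apply Real.tendsto_exp_atBot.comp
    apply Filter.tendsto_neg_atBot_iff.mpr
    exact tendsto_pow_atTop two_ne_zero
  have hneg : Tendsto (fun x : ℝ => -Real.exp (-(x^2))) atTop (𝓝 0) := by
    simpa using hexp.neg
  apply tendsto_of_tendsto_of_tendsto_of_le_of_le' hneg hexp
  · filter_upwards [eventually_ge_atTop (0:ℝ)] with x hx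
    have h := (sub_bounds x hx).1
    have := (Real.exp_pos (-(x^2))).le
    unfold Fa
    nlinarith
  · filter_upwards [eventually_ge_atTop (0:ℝ)] with x hx
    have h := (sub_bounds x hx).2
    have := (Real.exp_pos (-(x^2))).le
    unfold Fa
    nlinarith

lemma contFa' : Continuous Fa' := by
  unfold Fa'
  have hsc : Continuous fun x : ℝ => Real.sqrt (x^2+1) :=
    Real.continuous_sqrt.comp (by continuity)
  apply Continuous.mul
  · exact Real.continuous_exp.comp (by continuity)
  · apply Continuous.add
    · exact (by continuity : Continuous fun x:ℝ => -(2*x)).mul (continuous_id.sub hsc)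
    · exact continuous_const.sub (continuous_id.div hsc fun x => (spos x).ne')

lemma intExp : Integrable (fun x : ℝ => Real.exp (-(x^2))) := by
  simpa using integrable_exp_neg_mul_sq (b := 1) one_pos

lemma intFa' (y : ℝ) (hy : 0 ≤ y) : IntegrableOn Fa' (Ioi y) := by
  have h1 : IntegrableOn (fun x : ℝ => x ^ (2:ℝ) * Real.exp (-1 * x^2)) (Ioi 0) :=
    integrableOn_rpow_mul_exp_neg_mul_sq one_pos (by norm_num : (-1:ℝ) < 2)
  have h2 : IntegrableOn (fun x : ℝ => x^2 * Real.exp (-(x^2))) (Ioi 0) := by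
    apply h1.congr_fun _ measurableSet_Ioi
    intro x hx
    have : x ^ (2:ℝ) = x ^ (2:ℕ) := by
      rw [← Real.rpow_natCast x 2]; norm_num
    simp only [this]
    norm_num
  have h5 : IntegrableOn (fun x : ℝ => x^2 * Real.exp (-(x^2)) + 3 * Real.exp (-(x^2)))
      (Ioi y) := by
    apply IntegrableOn.mono_set _ (Ioi_subset_Ioi hy)
    exact h2.add (intExp.integrableOn.const_mul 3)
  apply Integrable.mono' h5 contFa'.aestronglyMeasurable.restrict
  filter_upwards [ae_restrict_mem measurableSet_Ioi] with x hx
  have hx0 : (0:ℝ) ≤ x := le_trans hy (le_of_lt hx)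
  have hs := spos x
  have hsq := ssq x
  have hb1 := (sub_bounds x hx0).1
  have hb2 := (sub_bounds x hx0).2
  have hds : x / Real.sqrt (x^2+1) ≤ 1 := by
    rw [div_le_one hs]; linarith
  have hds0 : 0 ≤ x / Real.sqrt (x^2+1) := by positivity
  have hA : |(-(2*x)) * (x - Real.sqrt (x^2+1)) + (1 - x / Real.sqrt (x^2+1))| ≤ x^2 + 3 := by
    rw [abs_le]
    constructor <;> nlinarith
  calc ‖Fa' x‖ = Real.exp (-(x^2)) *
        |(-(2*x)) * (x - Real.sqrt (x^2+1)) + (1 - x / Real.sqrt (x^2+1))| := by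
        unfold Fa'
        rw [Real.norm_eq_abs, abs_mul, abs_of_pos (Real.exp_pos _)]
    _ ≤ Real.exp (-(x^2)) * (x^2 + 3) := by
        exact mul_le_mul_of_nonneg_left hA (Real.exp_pos _).le
    _ = x^2 * Real.exp (-(x^2)) + 3 * Real.exp (-(x^2)) := by ring

lemma intEq (y : ℝ) (hy : 0 ≤ y) : ∫ x in Ioi y, Fa' x = -Fa y := by
  have := integral_Ioi_of_hasDerivAt_of_tendsto' (f := Fa) (f' := Fa') (a := y)
    (fun x _ => hderivFa x) (intFa' y hy) tendstoFa
  simpa using this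

theorem stmt12 (b : ℝ) (hb : 1 ≤ b) :
    Real.sqrt (Real.log b)
      + b * ∫ x in Set.Ioi (Real.sqrt (Real.log b)), Real.exp (-(x ^ 2)) ≤
      Real.sqrt (1 + Real.log b) := by
  set L := Real.log b with hLdef
  have hb0 : (0:ℝ) < b := lt_of_lt_of_le one_pos hb
  have hL : 0 ≤ L := Real.log_nonneg hb
  set y := Real.sqrt L with hydef
  have hy : 0 ≤ y := Real.sqrt_nonneg _
  have hy2 : y^2 = L := Real.sq_sqrt hL
  have hI : (∫ x in Set.Ioi y, Real.exp (-(x ^ 2))) ≤ ∫ x in Set.Ioi y, Fa' x := by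
    apply setIntegral_mono_on intExp.integrableOn (intFa' y hy) measurableSet_Ioi
    intro x hx
    exact key x (le_trans hy (le_of_lt hx))
  rw [intEq y hy] at hI
  have hFa : -Fa y = Real.exp (-L) * (Real.sqrt (L+1) - y) := by
    unfold Fa
    rw [hy2]
    ring
  have hbexp : b * Real.exp (-L) = 1 := by
    rw [hLdef, ← Real.exp_log hb0, ← Real.exp_add]
    simp
  have hmul : b * (∫ x in Set.Ioi y, Real.exp (-(x ^ 2))) ≤ Real.sqrt (L+1) - y := by
    calc b * (∫ x in Set.Ioi y, Real.exp (-(x ^ 2))) ≤ b * (-Fa y) :=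
          mul_le_mul_of_nonneg_left hI (le_of_lt hb0)
      _ = Real.sqrt (L+1) - y := by
          rw [hFa, ← mul_assoc, hbexp, one_mul]
  have hcomm : Real.sqrt (L+1) = Real.sqrt (1+L) := by rw [add_comm]
  linarith [hmul, hcomm.le, hcomm.ge]
end

section
/- Let K, E, F ≥ 1 be integers, L ∈ [0,1]^{K×E} a loss matrix with rows ℓ_a, and Φ ∈ [F]^{K×E} a feedback matrix. Suppose that every pair of neighboring actions is globally observable, i.e., for all neighbors (a,b) there exists v : [K] × [F] → ℝ with ∑_{c=1}^K v(c, Φ_{ci}) = ℓ_{ai} − ℓ_{bi} for all i ∈ [E]. Then every pair of Pareto optimal actions (a,b) is globally observable: there exists v : [K] × [F] → ℝ with ∑_{c=1}^K v(c, Φ_{ci}) = ℓ_{ai} − ℓ_{bi} for all i ∈ [E]. -/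
open scoped BigOperators

/-- The probability simplex in `ℝ^E`. -/
def probSimplex (E : ℕ) : Set (Fin E → ℝ) :=
  {u | (∀ i, 0 ≤ u i ∧ u i ≤ 1) ∧ ∑ i, u i = 1}

/-- The cell of action `a`: the set of distributions on which `a` is optimal. -/
def cell {K E : ℕ} (L : Fin K → Fin E → ℝ) (a : Fin K) : Set (Fin E → ℝ) :=
  {u | u ∈ probSimplex E ∧ ∀ b, ∑ i, L a i * u i ≤ ∑ i, L b i * u i}

/-- The dimension of a set: the dimension of its affine hull. -/
noncomputable def dimSet {E : ℕ} (s : Set (Fin E → ℝ)) : ℕ :=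
  Module.finrank ℝ (affineSpan ℝ s).direction

/-- Action `a` is Pareto optimal if its cell has dimension `E - 1`. -/
def ParetoOptimal {K E : ℕ} (L : Fin K → Fin E → ℝ) (a : Fin K) : Prop :=
  (cell L a).Nonempty ∧ dimSet (cell L a) = E - 1

/-- Pareto optimal actions `a` and `b` are neighbors if `C_a ∩ C_b` has dimension `E - 2`. -/
def Neighbors {K E : ℕ} (L : Fin K → Fin E → ℝ) (a b : Fin K) : Prop :=
  ParetoOptimal L a ∧ ParetoOptimal L b ∧
    (cell L a ∩ cell L b).Nonempty ∧ dimSet (cell L a ∩ cell L b) = E - 2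
/-- The pair `(a, b)` is globally observable: there is an estimation function `v` with
`∑_c v(c, Φ_{ci}) = ℓ_{ai} − ℓ_{bi}` for all outcomes `i`. -/
def GloballyObservable {K E F : ℕ} (L : Fin K → Fin E → ℝ) (Φ : Fin K → Fin E → Fin F)
    (a b : Fin K) : Prop :=
  ∃ v : Fin K → Fin F → ℝ, ∀ i, ∑ c, v c (Φ c i) = L a i - L b i


open AffineMap

variable {V : Type*} [NormedAddCommGroup V] [NormedSpace ℝ V]

/-- Reparametrization of a line. -/
lemma lineMap_reparam {x y : V} {t t' r : ℝ} (h : t ≠ t') :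
    lineMap x y r =
      lineMap (lineMap x y t) (lineMap x y t') ((r - t) / (t' - t)) := by
  simp only [lineMap_apply_module]
  have h' : t' - t ≠ 0 := sub_ne_zero.mpr (Ne.symm h)
  match_scalars <;> field_simp <;> ring

/-- An affine subspace containing two distinct points of a line contains the whole line. -/
lemma line_subset_of_two_mem {A : AffineSubspace ℝ V} {x y : V} {t t' : ℝ} (h : t ≠ t')
    (h1 : lineMap x y t ∈ A) (h2 : lineMap x y t' ∈ A) (r : ℝ) : lineMap x y r ∈ A := by
  rw [lineMap_reparam h (r := r)]
  exact AffineMap.lineMap_mem _ h1 h2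

/-- A convex set not contained in any of finitely many affine subspaces has a point
avoiding all of them. -/
lemma exists_avoid {C : Set V} (hC : Convex ℝ C) (hne : C.Nonempty) {ι : Type*}
    (s : Finset ι) (A : ι → AffineSubspace ℝ V) (h : ∀ i ∈ s, ¬ C ⊆ (A i : Set V)) :
    ∃ x ∈ C, ∀ i ∈ s, x ∉ A i := by
  classical
  induction s using Finset.induction_on with
  | empty => exact ⟨hne.choose, hne.choose_spec, by simp⟩
  | @insert j s hj ih =>
    obtain ⟨x, hxC, hx⟩ := ih (fun i hi => h i (Finset.mem_insert_of_mem hi))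
    by_cases hxj : x ∉ A j
    · exact ⟨x, hxC, fun i hi => by
        rcases Finset.mem_insert.1 hi with rfl | hi
        · exact hxj
        · exact hx i hi⟩
    push_neg at hxj
    obtain ⟨y, hyC, hyj⟩ : ∃ y ∈ C, y ∉ A j := by
      by_contra hcon; push_neg at hcon
      exact h j (Finset.mem_insert_self _ _) hcon
    -- bad parameter set
    set Bad : Set ℝ := ⋃ i ∈ (insert j s : Finset ι), {t : ℝ | lineMap x y t ∈ A i} with hBad
    have hfin : Bad.Finite := by
      refine Set.Finite.biUnion (Finset.finite_toSet _) (fun i hi => ?_)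
      refine Set.Subsingleton.finite (fun t ht t' ht' => ?_)
      by_contra hne'
      rcases Finset.mem_insert.1 hi with rfl | hi'
      · exact hyj (by simpa using line_subset_of_two_mem hne' ht ht' 1)
      · exact hx i hi' (by simpa using line_subset_of_two_mem hne' ht ht' 0)
    obtain ⟨t, ht⟩ : (Set.Ioc (0:ℝ) 1 \ Bad).Nonempty :=
      ((Set.Ioc_infinite (by norm_num)).diff hfin).nonempty
    refine ⟨lineMap x y t, hC.lineMap_mem hxC hyC ⟨le_of_lt ht.1.1, ht.1.2⟩, fun i hi hmem => ?_⟩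
    exact ht.2 (Set.mem_biUnion hi hmem)

/-- If `x ∉ A` and `z` avoids the affine span of `A` with `x` inserted, then the
line through `x` and `z` avoids `A`. -/
lemma seg_avoid {A : AffineSubspace ℝ V} {x z : V}
    (hx : x ∉ A) (hz : z ∉ affineSpan ℝ (insert x (A : Set V))) (t : ℝ) :
    lineMap x z t ∉ A := by
  intro hmem
  have ht0 : t ≠ 0 := by rintro rfl; simp at hmem; exact hx hmem
  set B := affineSpan ℝ (insert x (A : Set V)) with hB
  have hxB : x ∈ B := mem_affineSpan ℝ (Set.mem_insert _ _)
  have hwB : lineMap x z t ∈ B :=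
    mem_affineSpan ℝ (Set.mem_insert_of_mem _ hmem)
  apply hz
  have : z = lineMap x (lineMap x z t) t⁻¹ := by
    simp only [lineMap_apply_module]
    match_scalars <;> field_simp <;> ring
  rw [this]
  exact AffineMap.lineMap_mem _ hxB hwB

variable {E : ℕ}

noncomputable def sumLM (E : ℕ) : (Fin E → ℝ) →ₗ[ℝ] ℝ := ∑ i, LinearMap.proj i

lemma sumLM_apply (u : Fin E → ℝ) : sumLM E u = ∑ i, u i := by simp [sumLM]

lemma finrank_ker_sumLM (hE : 1 ≤ E) :
    Module.finrank ℝ (LinearMap.ker (sumLM E)) = E - 1 := by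
  have hsurj : Function.Surjective (sumLM E) := fun r => ⟨Pi.single ⟨0, hE⟩ r, by simp [sumLM]⟩
  have h := LinearMap.finrank_range_add_finrank_ker (sumLM E)
  rw [LinearMap.range_eq_top.mpr hsurj] at h
  simp only [finrank_top, Module.finrank_self, Module.finrank_pi, Fintype.card_fin] at h
  omega

/-- `vectorSpan` of a set all of whose elements sum to 1 is inside `ker sumLM`. -/
lemma vectorSpan_le_ker {s : Set (Fin E → ℝ)} (hs : ∀ u ∈ s, ∑ i, u i = 1) :
    vectorSpan ℝ s ≤ LinearMap.ker (sumLM E) := by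
  rw [vectorSpan_def, Submodule.span_le]
  rintro v ⟨p, hp, q, hq, rfl⟩
  simp only [SetLike.mem_coe, LinearMap.mem_ker, vsub_eq_sub]
  rw [sumLM_apply]
  simp [Finset.sum_sub_distrib, hs p hp, hs q hq]

noncomputable def wLM (w : Fin E → ℝ) : (Fin E → ℝ) →ₗ[ℝ] ℝ := ∑ i, w i • LinearMap.proj i

lemma wLM_apply (w u : Fin E → ℝ) : wLM w u = ∑ i, w i * u i := by simp [wLM]

/-- If `w` is non-constant, the kernel of `(sum, ⟨w,·⟩)` has dimension `E - 2`. -/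
lemma finrank_ker_pair {w : Fin E → ℝ} {i j : Fin E} (hij : w i ≠ w j) :
    Module.finrank ℝ (LinearMap.ker ((sumLM E).prod (wLM w))) = E - 2 := by
  set ψ := (sumLM E).prod (wLM w) with hψ
  have hei : ∀ k : Fin E, ψ (Pi.single k 1) = (1, w k) := by
    intro k
    simp [hψ, LinearMap.prod_apply, sumLM_apply, wLM_apply, Pi.single_apply, mul_ite,
      Finset.sum_ite_eq']
  have hsurj : Function.Surjective ψ := by
    intro p
    obtain ⟨s, t⟩ := p
    refine ⟨s • (Pi.single i 1 : Fin E → ℝ) + ((t - s * w i)/(w i - w j)) • ((Pi.single i 1 : Fin E → ℝ) - Pi.single j 1), ?_⟩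
    have hne : w i - w j ≠ 0 := sub_ne_zero.mpr hij
    have h1 := hei i
    have h2 := hei j
    simp only [map_add, map_smul, map_sub, h1, h2]
    simp only [Prod.smul_mk, Prod.mk_sub_mk, smul_eq_mul, Prod.mk_add_mk]
    rw [Prod.mk.injEq]
    constructor
    · ring
    · field_simp; ring
  have h := LinearMap.finrank_range_add_finrank_ker ψ
  rw [LinearMap.range_eq_top.mpr hsurj] at h
  simp only [finrank_top, Module.finrank_pi, Fintype.card_fin, Module.finrank_prod,
    Module.finrank_self] at h
  have hE2 : 2 ≤ E := by
    rcases Nat.lt_or_ge E 2 with hlt | hge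
    · interval_cases E
      · exact i.elim0
      · exact absurd (congrArg w (Subsingleton.elim i j)) hij
    · exact hge
  omega
variable {K E : ℕ} {L : Fin K → Fin E → ℝ}

lemma probSimplex_convex : Convex ℝ (probSimplex E) := by
  intro u hu v hv p q hp hq hpq
  refine ⟨fun i => ⟨add_nonneg (mul_nonneg hp (hu.1 i).1) (mul_nonneg hq (hv.1 i).1), ?_⟩, ?_⟩
  · calc p * u i + q * v i ≤ p * 1 + q * 1 := by
          gcongr
          · exact (hu.1 i).2
          · exact (hv.1 i).2
      _ = 1 := by linarith
  · simp only [Pi.add_apply, Pi.smul_apply, smul_eq_mul]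
    rw [Finset.sum_add_distrib, ← Finset.mul_sum, ← Finset.mul_sum, hu.2, hv.2]
    linarith

lemma probSimplex_closed : IsClosed (probSimplex E) := by
  have h1 : IsClosed {u : Fin E → ℝ | ∀ i, 0 ≤ u i ∧ u i ≤ 1} := by
    rw [Set.setOf_forall]
    refine isClosed_iInter fun i => ?_
    exact IsClosed.inter (isClosed_le continuous_const (continuous_apply i))
      (isClosed_le (continuous_apply i) continuous_const)
  have h2 : IsClosed {u : Fin E → ℝ | ∑ i, u i = 1} :=
    isClosed_eq (by continuity) continuous_const
  exact h1.inter h2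

lemma single_mem_probSimplex (i : Fin E) : (Pi.single i 1 : Fin E → ℝ) ∈ probSimplex E := by
  refine ⟨fun j => ?_, by simp⟩
  rcases eq_or_ne j i with rfl | h
  · simp
  · simp [Pi.single_apply, h]

lemma probSimplex_nonempty (hE : 1 ≤ E) : (probSimplex E).Nonempty :=
  ⟨Pi.single ⟨0, hE⟩ 1, single_mem_probSimplex _⟩

lemma cell_convex (a : Fin K) : Convex ℝ (cell L a) := by
  intro u hu v hv p q hp hq hpq
  refine ⟨probSimplex_convex hu.1 hv.1 hp hq hpq, fun b => ?_⟩
  simp only [Pi.add_apply, Pi.smul_apply, smul_eq_mul, mul_add]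
  rw [Finset.sum_add_distrib, Finset.sum_add_distrib]
  have key : ∀ c : Fin K, ∑ i, L c i * (p * u i) = p * ∑ i, L c i * u i := by
    intro c; rw [Finset.mul_sum]; congr 1; ext i; ring
  have key' : ∀ c : Fin K, ∑ i, L c i * (q * v i) = q * ∑ i, L c i * v i := by
    intro c; rw [Finset.mul_sum]; congr 1; ext i; ring
  rw [key, key', key, key']
  have := hu.2 b; have := hv.2 b
  nlinarith

lemma cell_closed (a : Fin K) : IsClosed (cell L a) := by
  have h2 : IsClosed {u : Fin E → ℝ | ∀ b, ∑ i, L a i * u i ≤ ∑ i, L b i * u i} := by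
    rw [Set.setOf_forall]
    exact isClosed_iInter fun b => isClosed_le (by continuity) (by continuity)
  exact probSimplex_closed.inter h2

/-- Stability: cells containing points arbitrarily close to `u` contain `u`. -/
lemma exists_eps (u : Fin E → ℝ) :
    ∃ ε > 0, ∀ u', dist u' u < ε → ∀ c, u' ∈ cell L c → u ∈ cell L c := by
  classical
  set O : Set (Fin E → ℝ) := ⋂ (c : Fin K) (_ : u ∉ cell L c), (cell L c)ᶜ with hO
  have hopen : IsOpen O := by
    refine isOpen_iInter_of_finite fun c => isOpen_iInter_of_finite fun hc => ?_
    exact (cell_closed c).isOpen_compl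
  have huO : u ∈ O := by
    simp only [hO, Set.mem_iInter]
    exact fun c hc => hc
  obtain ⟨ε, hε, hball⟩ := Metric.isOpen_iff.1 hopen u huO
  refine ⟨ε, hε, fun u' hu' c hc => ?_⟩
  by_contra hnc
  have : u' ∈ O := hball (by rwa [Metric.mem_ball])
  simp only [hO, Set.mem_iInter] at this
  exact this c hnc hc

/-- Every point of the simplex is in some cell. -/
lemma exists_cell (hK : 1 ≤ K) {u : Fin E → ℝ} (hu : u ∈ probSimplex E) :
    ∃ c, u ∈ cell L c := by
  obtain ⟨c, -, hc⟩ := Finset.exists_min_image Finset.univ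
    (fun c => ∑ i, L c i * u i) ⟨⟨0, hK⟩, Finset.mem_univ _⟩
  exact ⟨c, hu, fun b => hc b (Finset.mem_univ b)⟩
section Bridge
variable {K E : ℕ} {L : Fin K → Fin E → ℝ}

lemma dimSet_le_sub_one (hE : 1 ≤ E) {s : Set (Fin E → ℝ)} (hs : s ⊆ probSimplex E) :
    dimSet s ≤ E - 1 := by
  rw [dimSet, direction_affineSpan]
  rw [← finrank_ker_sumLM hE]
  exact Submodule.finrank_mono (vectorSpan_le_ker fun u hu => (hs hu).2)

lemma ker_le_vectorSpan_ball {u : Fin E → ℝ} (hu : u ∈ probSimplex E) {ε : ℝ} (hε : 0 < ε) :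
    LinearMap.ker (sumLM E) ≤ vectorSpan ℝ (probSimplex E ∩ Metric.ball u ε) := by
  set C := probSimplex E ∩ Metric.ball u ε with hC
  have huC : u ∈ C := ⟨hu, Metric.mem_ball_self hε⟩
  set δ := min (ε/2) 1 with hδ
  have hδ0 : 0 < δ := by positivity
  have hδ1 : δ ≤ 1 := min_le_right _ _
  have hδε : δ < ε := lt_of_le_of_lt (min_le_left _ _) (by linarith)
  have hsingle : ∀ i : Fin E, (Pi.single i 1 : Fin E → ℝ) - u ∈ vectorSpan ℝ C := by
    intro i
    have hpmem : (1 - δ) • u + δ • (Pi.single i 1 : Fin E → ℝ) ∈ probSimplex E :=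
      probSimplex_convex hu (single_mem_probSimplex i) (by linarith) (le_of_lt hδ0) (by ring)
    have hdiff : (1 - δ) • u + δ • (Pi.single i 1 : Fin E → ℝ) - u
        = δ • ((Pi.single i 1 : Fin E → ℝ) - u) := by module
    have hnorm : ‖(Pi.single i 1 : Fin E → ℝ) - u‖ ≤ 1 := by
      rw [pi_norm_le_iff_of_nonneg (by norm_num)]
      intro j
      have h1 := (hu.1 j).1
      have h2 := (hu.1 j).2
      rw [Real.norm_eq_abs, abs_le]
      rcases eq_or_ne j i with rfl | hne
      · simp only [Pi.sub_apply, Pi.single_eq_same]; constructor <;> linarith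
      · simp only [Pi.sub_apply, Pi.single_eq_of_ne hne]; constructor <;> linarith
    have hball : (1 - δ) • u + δ • (Pi.single i 1 : Fin E → ℝ) ∈ Metric.ball u ε := by
      rw [Metric.mem_ball, dist_eq_norm, show (1 - δ) • u + δ • (Pi.single i 1 : Fin E → ℝ) - u
        = δ • ((Pi.single i 1 : Fin E → ℝ) - u) from hdiff]
      rw [norm_smul, Real.norm_eq_abs, abs_of_pos hδ0]
      calc δ * ‖(Pi.single i 1 : Fin E → ℝ) - u‖ ≤ δ * 1 := by
            exact mul_le_mul_of_nonneg_left hnorm (le_of_lt hδ0)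
        _ < ε := by linarith
    have hmem : ((1 - δ) • u + δ • (Pi.single i 1 : Fin E → ℝ)) -ᵥ u ∈ vectorSpan ℝ C :=
      vsub_mem_vectorSpan ℝ ⟨hpmem, hball⟩ huC
    rw [vsub_eq_sub, hdiff] at hmem
    have := (vectorSpan ℝ C).smul_mem δ⁻¹ hmem
    rwa [smul_smul, inv_mul_cancel₀ (ne_of_gt hδ0), one_smul] at this
  intro v hv
  rw [LinearMap.mem_ker, sumLM_apply] at hv
  have hvrep : v = ∑ i, v i • ((Pi.single i 1 : Fin E → ℝ) - u) := by
    funext j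
    simp only [Finset.sum_apply, Pi.smul_apply, Pi.sub_apply, smul_eq_mul, mul_sub]
    rw [Finset.sum_sub_distrib, ← Finset.sum_mul, hv, zero_mul, sub_zero]
    simp [Pi.single_apply, mul_ite, Finset.sum_ite_eq]
  rw [hvrep]
  exact Submodule.sum_mem _ fun i _ => Submodule.smul_mem _ _ (hsingle i)

lemma ker_le_vectorSpan_simplex (hE : 1 ≤ E) :
    LinearMap.ker (sumLM E) ≤ vectorSpan ℝ (probSimplex E) := by
  obtain ⟨u, hu⟩ := probSimplex_nonempty hE
  exact le_trans (ker_le_vectorSpan_ball hu one_pos)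
    (vectorSpan_mono ℝ Set.inter_subset_left)

/-- Every point of the simplex is in the cell of some Pareto optimal action. -/
lemma exists_pareto_cell (hK : 1 ≤ K) (hE : 1 ≤ E) {u : Fin E → ℝ}
    (hu : u ∈ probSimplex E) : ∃ c, ParetoOptimal L c ∧ u ∈ cell L c := by
  classical
  by_cases hE2 : 2 ≤ E
  · obtain ⟨ε, hε, heps⟩ := exists_eps (L := L) u
    set C := probSimplex E ∩ Metric.ball u ε with hC
    set A : Fin K → AffineSubspace ℝ (Fin E → ℝ) :=
      fun c => if ParetoOptimal L c then ⊥ else affineSpan ℝ (cell L c) with hA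
    have hCne : C.Nonempty := ⟨u, hu, Metric.mem_ball_self hε⟩
    have hnotsub : ∀ c ∈ Finset.univ (α := Fin K), ¬ C ⊆ (A c : Set (Fin E → ℝ)) := by
      intro c _ hsub
      by_cases hp : ParetoOptimal L c
      · rw [hA] at hsub; simp only [if_pos hp, AffineSubspace.bot_coe] at hsub
        exact Set.notMem_empty _ (hsub hCne.choose_spec)
      · rw [hA] at hsub; simp only [if_neg hp] at hsub
        rcases Set.eq_empty_or_nonempty (cell L c) with hcell | hcell
        · rw [hcell, AffineSubspace.span_empty, AffineSubspace.bot_coe] at hsub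
          exact hsub hCne.choose_spec
        · have hdim : dimSet (cell L c) ≤ E - 1 := dimSet_le_sub_one hE (fun x hx => hx.1)
          have hne' : dimSet (cell L c) ≠ E - 1 := fun h => hp ⟨hcell, h⟩
          have hlow : E - 1 ≤ dimSet (cell L c) := by
            rw [dimSet, direction_affineSpan, ← finrank_ker_sumLM hE]
            refine Submodule.finrank_mono (le_trans (ker_le_vectorSpan_ball hu hε) ?_)
            have h1 : affineSpan ℝ C ≤ affineSpan ℝ (cell L c) := by
              rw [affineSpan_le]
              exact hsub
            have := AffineSubspace.direction_le h1
            rwa [direction_affineSpan, direction_affineSpan] at this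
          omega
    obtain ⟨x, hxC, hx⟩ := exists_avoid (probSimplex_convex.inter (convex_ball u ε))
      hCne Finset.univ A hnotsub
    obtain ⟨c, hc⟩ := exists_cell hK hxC.1 (L := L)
    have hpc : ParetoOptimal L c := by
      by_contra hp
      apply hx c (Finset.mem_univ c)
      rw [hA]
      simp only [if_neg hp]
      exact mem_affineSpan ℝ hc
    exact ⟨c, hpc, heps x (by simpa [Metric.mem_ball] using hxC.2) c hc⟩
  · -- E = 1 : every nonempty cell is Pareto optimal
    obtain ⟨c, hc⟩ := exists_cell hK hu (L := L)
    have hdim : dimSet (cell L c) ≤ E - 1 := dimSet_le_sub_one hE (fun x hx => hx.1)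
    have hE1 : E = 1 := by omega
    exact ⟨c, ⟨⟨u, hc⟩, by omega⟩, hc⟩

/-- Key classification: a non-neighboring pair of distinct Pareto actions has
intersection of codimension at least 2. -/
lemma bad_dim (hE : 1 ≤ E) {c d : Fin K} (hc : ParetoOptimal L c) (hd : ParetoOptimal L d)
    (hne : (cell L c ∩ cell L d).Nonempty) (hLcd : L c ≠ L d)
    (hnb : ¬ Neighbors L c d) : dimSet (cell L c ∩ cell L d) + 2 ≤ E - 1 := by
  set w : Fin E → ℝ := fun i => L c i - L d i with hw
  have hw0 : ∀ u ∈ cell L c ∩ cell L d, wLM w u = 0 := by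
    rintro u ⟨hu1, hu2⟩
    have h1 := hu1.2 d
    have h2 := hu2.2 c
    rw [wLM_apply]
    simp only [hw, sub_mul]
    rw [Finset.sum_sub_distrib]
    linarith
  obtain ⟨i, j, hij⟩ : ∃ i j, w i ≠ w j := by
    by_contra hcon
    push_neg at hcon
    obtain ⟨u, hu⟩ := hne
    set i0 : Fin E := ⟨0, hE⟩ with hi0def
    have hlam : w i0 = 0 := by
      have h0 := hw0 u hu
      rw [wLM_apply] at h0
      have hrw : ∑ i, w i * u i = w i0 * ∑ i, u i := by
        rw [Finset.mul_sum]
        exact Finset.sum_congr rfl fun i _ => by rw [hcon i i0]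
      rw [hrw, hu.1.1.2, mul_one] at h0
      exact h0
    apply hLcd
    funext i
    have : w i = 0 := by rw [hcon i i0, hlam]
    simpa [hw, sub_eq_zero] using this
  have hk : dimSet (cell L c ∩ cell L d) ≤ E - 2 := by
    rw [dimSet, direction_affineSpan, ← finrank_ker_pair hij]
    refine Submodule.finrank_mono ?_
    rw [vectorSpan_def, Submodule.span_le]
    rintro v ⟨p, hp, q, hq, rfl⟩
    simp only [SetLike.mem_coe, LinearMap.mem_ker, vsub_eq_sub, map_sub,
      LinearMap.prod_apply, Function.prod]
    have hsp : sumLM E p = 1 := by rw [sumLM_apply]; exact hp.1.1.2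
    have hsq : sumLM E q = 1 := by rw [sumLM_apply]; exact hq.1.1.2
    rw [Prod.mk_sub_mk, hsp, hsq, hw0 p hp, hw0 q hq]
    simp
  have hkne : dimSet (cell L c ∩ cell L d) ≠ E - 2 := fun h => hnb ⟨hc, hd, hne, h⟩
  omega
end Bridge
section Seg
variable {K E F : ℕ} {L : Fin K → Fin E → ℝ} {Φ : Fin K → Fin E → Fin F}

lemma GO_of_eq {c d : Fin K} (h : L c = L d) : GloballyObservable L Φ c d :=
  ⟨0, fun i => by simp [h]⟩

lemma GO_symm {c d : Fin K} (h : GloballyObservable L Φ c d) : GloballyObservable L Φ d c := by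
  obtain ⟨v, hv⟩ := h
  exact ⟨-v, fun i => by simp [hv i]⟩

lemma GO_trans {c d e : Fin K} (h1 : GloballyObservable L Φ c d)
    (h2 : GloballyObservable L Φ d e) : GloballyObservable L Φ c e := by
  obtain ⟨v, hv⟩ := h1
  obtain ⟨w, hw⟩ := h2
  refine ⟨v + w, fun i => ?_⟩
  simp only [Pi.add_apply, Finset.sum_add_distrib, hv i, hw i]
  ring

/-- Walking along a segment inside the simplex whose points only meet "good" pairs of
Pareto cells propagates global observability. -/
lemma seg_step (hK : 1 ≤ K) (hE : 1 ≤ E) {a : Fin K} {x z : Fin E → ℝ}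
    (hx : x ∈ probSimplex E) (hz : z ∈ probSimplex E)
    (hgood : ∀ t ∈ Set.Icc (0:ℝ) 1, ∀ c d, ParetoOptimal L c → ParetoOptimal L d →
      AffineMap.lineMap x z t ∈ cell L c → AffineMap.lineMap x z t ∈ cell L d →
      GloballyObservable L Φ c d)
    (hstart : ∃ c, ParetoOptimal L c ∧ x ∈ cell L c ∧ GloballyObservable L Φ a c) :
    ∃ c, ParetoOptimal L c ∧ z ∈ cell L c ∧ GloballyObservable L Φ a c := by
  set γ : ℝ → (Fin E → ℝ) := fun t => AffineMap.lineMap x z t with hγ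
  have hdist : ∀ s t : ℝ, dist (γ s) (γ t) = |s - t| * ‖z - x‖ := by
    intro s t
    rw [dist_eq_norm]
    have : γ s - γ t = (s - t) • (z - x) := by
      simp only [hγ, AffineMap.lineMap_apply_module]
      module
    rw [this, norm_smul, Real.norm_eq_abs]
  have hγΔ : ∀ t ∈ Set.Icc (0:ℝ) 1, γ t ∈ probSimplex E :=
    fun t ht => probSimplex_convex.lineMap_mem hx hz ht
  set T : Set ℝ := {t | t ∈ Set.Icc (0:ℝ) 1 ∧
    ∃ c, ParetoOptimal L c ∧ γ t ∈ cell L c ∧ GloballyObservable L Φ a c} with hT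
  have h0T : (0:ℝ) ∈ T := by
    refine ⟨⟨le_refl 0, zero_le_one⟩, ?_⟩
    simpa [hγ] using hstart
  have hbdd : BddAbove T := ⟨1, fun t ht => ht.1.2⟩
  set t0 := sSup T with ht0
  have ht0mem : t0 ∈ Set.Icc (0:ℝ) 1 :=
    ⟨le_csSup hbdd h0T, csSup_le ⟨0, h0T⟩ fun t ht => ht.1.2⟩
  obtain ⟨ε, hε, heps⟩ := exists_eps (L := L) (γ t0)
  set δ := ε / (‖z - x‖ + 1) with hδ
  have hnorm0 : (0:ℝ) ≤ ‖z - x‖ := norm_nonneg _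
  have hδ0 : 0 < δ := by positivity
  have hclose : ∀ s t : ℝ, |s - t| < δ → dist (γ s) (γ t) < ε := by
    intro s t h
    rw [hdist]
    calc |s - t| * ‖z - x‖ ≤ |s - t| * (‖z - x‖ + 1) := by
          exact mul_le_mul_of_nonneg_left (by linarith) (abs_nonneg _)
      _ < δ * (‖z - x‖ + 1) := by
          exact mul_lt_mul_of_pos_right h (by linarith)
      _ = ε := by rw [hδ, div_mul_cancel₀ _ (by positivity)]
  have ht0T : t0 ∈ T := by
    obtain ⟨t, htT, htlt⟩ := exists_lt_of_lt_csSup ⟨0, h0T⟩ (show t0 - δ < t0 by linarith)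
    obtain ⟨c, hc, hcell, hGO⟩ := htT.2
    have htle : t ≤ t0 := le_csSup hbdd htT
    have : dist (γ t) (γ t0) < ε := hclose t t0 (by rw [abs_sub_lt_iff]; constructor <;> linarith)
    exact ⟨ht0mem, c, hc, heps (γ t) this c hcell, hGO⟩
  have ht01 : t0 = 1 := by
    by_contra hne
    have ht0lt : t0 < 1 := lt_of_le_of_ne ht0mem.2 hne
    set t1 := min 1 (t0 + δ/2) with ht1
    have ht1mem : t1 ∈ Set.Icc (0:ℝ) 1 :=
      ⟨le_min (by linarith [ht0mem.1]) (by linarith [ht0mem.1]), min_le_left _ _⟩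
    have ht1gt : t0 < t1 := lt_min ht0lt (by linarith)
    have ht1close : |t1 - t0| < δ := by
      rw [abs_sub_lt_iff]
      have : t1 ≤ t0 + δ/2 := min_le_right _ _
      constructor <;> linarith
    obtain ⟨d, hd, hdcell⟩ := exists_pareto_cell hK hE (hγΔ t1 ht1mem) (L := L)
    have hdt0 : γ t0 ∈ cell L d := heps (γ t1) (hclose t1 t0 ht1close) d hdcell
    obtain ⟨c, hc, hccell, hGO⟩ := ht0T.2
    have hGOcd : GloballyObservable L Φ c d := hgood t0 ht0mem c d hc hd hccell hdt0
    have ht1T : t1 ∈ T := ⟨ht1mem, d, hd, hdcell, GO_trans hGO hGOcd⟩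
    exact absurd (le_csSup hbdd ht1T) (not_le.mpr ht1gt)
  rw [ht01] at ht0T
  obtain ⟨c, hc, hcell, hGO⟩ := ht0T.2
  refine ⟨c, hc, ?_, hGO⟩
  simpa [hγ] using hcell
end Seg
section BadPair
variable {K E : ℕ} (L : Fin K → Fin E → ℝ)

def BadPair (p : Fin K × Fin K) : Prop :=
  ParetoOptimal L p.1 ∧ ParetoOptimal L p.2 ∧ (cell L p.1 ∩ cell L p.2).Nonempty ∧
    L p.1 ≠ L p.2 ∧ ¬ Neighbors L p.1 p.2

open Classical in
noncomputable def ApSub (p : Fin K × Fin K) : AffineSubspace ℝ (Fin E → ℝ) :=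
  if BadPair L p then affineSpan ℝ (cell L p.1 ∩ cell L p.2) else ⊥

lemma ApSub_of_bad {p : Fin K × Fin K} (hp : BadPair L p) :
    ApSub L p = affineSpan ℝ (cell L p.1 ∩ cell L p.2) := by
  rw [ApSub, if_pos hp]

lemma ApSub_of_not_bad {p : Fin K × Fin K} (hp : ¬ BadPair L p) : ApSub L p = ⊥ := by
  rw [ApSub, if_neg hp]
end BadPair
lemma finrank_span_singleton_le' {V : Type*} [NormedAddCommGroup V] [NormedSpace ℝ V]
    [FiniteDimensional ℝ V] (v : V) : Module.finrank ℝ (Submodule.span ℝ {v}) ≤ 1 := by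
  rcases eq_or_ne v 0 with rfl | hv
  · rw [Submodule.span_zero_singleton]; simp
  · exact le_of_eq (finrank_span_singleton hv)

theorem stmt15 {K E F : ℕ} (hK : 1 ≤ K) (hE : 1 ≤ E) (hF : 1 ≤ F)
    (L : Fin K → Fin E → ℝ) (hL : ∀ a i, L a i ∈ Set.Icc (0 : ℝ) 1)
    (Φ : Fin K → Fin E → Fin F)
    (hglob : ∀ a b : Fin K, Neighbors L a b → GloballyObservable L Φ a b)
    (a b : Fin K) (hPa : ParetoOptimal L a) (hPb : ParetoOptimal L b) :
    GloballyObservable L Φ a b := by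
  classical
  by_cases hE2 : 2 ≤ E
  swap
  · -- E = 1 : a and b are neighbors
    have hE1 : E = 1 := by omega
    subst hE1
    obtain ⟨u, hu⟩ := hPa.1
    obtain ⟨v, hv⟩ := hPb.1
    have huv : u = v := by
      funext j
      have h1 : u 0 = 1 := by have := hu.1.2; rwa [Fin.sum_univ_one] at this
      have h2 : v 0 = 1 := by have := hv.1.2; rwa [Fin.sum_univ_one] at this
      rw [Subsingleton.elim j 0, h1, h2]
    refine hglob a b ⟨hPa, hPb, ⟨u, hu, huv ▸ hv⟩, ?_⟩
    have := dimSet_le_sub_one (le_refl 1) (s := cell L a ∩ cell L b) (fun x hx => hx.1.1)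
    omega
  · have hApdim : ∀ p, BadPair L p → Module.finrank ℝ (ApSub L p).direction + 2 ≤ E - 1 := by
      intro p hp
      rw [ApSub_of_bad L hp]
      exact bad_dim hE hp.1 hp.2.1 hp.2.2.1 hp.2.2.2.1 hp.2.2.2.2
    have hgoodAt : ∀ u : Fin E → ℝ, (∀ p, u ∉ ApSub L p) → ∀ c d, ParetoOptimal L c →
        ParetoOptimal L d → u ∈ cell L c → u ∈ cell L d → GloballyObservable L Φ c d := by
      intro u hu c d hc hd huc hud
      by_cases hcd : L c = L d
      · exact GO_of_eq hcd
      by_cases hnb : Neighbors L c d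
      · exact hglob c d hnb
      have hb : BadPair L (c, d) := ⟨hc, hd, ⟨u, huc, hud⟩, hcd, hnb⟩
      refine absurd ?_ (hu (c, d))
      rw [ApSub_of_bad L hb]
      exact mem_affineSpan ℝ ⟨huc, hud⟩
    have hnotsub : ∀ (e : Fin K), ParetoOptimal L e →
        ∀ p ∈ Finset.univ (α := Fin K × Fin K),
          ¬ (cell L e ⊆ (ApSub L p : Set (Fin E → ℝ))) := by
      intro e he p _ hsub
      by_cases hp : BadPair L p
      · have h1 : E - 1 ≤ Module.finrank ℝ (ApSub L p).direction := by
          rw [← he.2]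
          exact Submodule.finrank_mono (AffineSubspace.direction_le (affineSpan_le.mpr hsub))
        have := hApdim p hp
        omega
      · rw [ApSub_of_not_bad L hp] at hsub
        rw [AffineSubspace.bot_coe] at hsub
        exact Set.notMem_empty _ (hsub he.1.choose_spec)
    obtain ⟨x, hxa, hxav⟩ := exists_avoid (cell_convex a) hPa.1 Finset.univ (ApSub L)
      (hnotsub a hPa)
    obtain ⟨y, hyb, hyav⟩ := exists_avoid (cell_convex b) hPb.1 Finset.univ (ApSub L)
      (hnotsub b hPb)
    have hins : ∀ (w : Fin E → ℝ) (p : Fin K × Fin K),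
        Module.finrank ℝ (affineSpan ℝ (insert w (ApSub L p : Set (Fin E → ℝ)))).direction + 1
          ≤ E - 1 := by
      intro w p
      by_cases hp : BadPair L p
      · have hne : (cell L p.1 ∩ cell L p.2).Nonempty := hp.2.2.1
        have hq0 : hne.choose ∈ ApSub L p := by
          rw [ApSub_of_bad L hp]
          exact mem_affineSpan ℝ hne.choose_spec
        rw [AffineSubspace.direction_affineSpan_insert hq0]
        have hsup := Submodule.finrank_sup_add_finrank_inf_eq
          (Submodule.span ℝ {w -ᵥ hne.choose}) (ApSub L p).direction
        have h1 := finrank_span_singleton_le' (w -ᵥ hne.choose)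
        have h2 := hApdim p hp
        omega
      · rw [ApSub_of_not_bad L hp, AffineSubspace.bot_coe]
        rw [show insert w (∅ : Set (Fin E → ℝ)) = {w} by simp]
        rw [direction_affineSpan, vectorSpan_singleton]
        simp only [finrank_bot]
        omega
    have hΔnotsub : ∀ q ∈ Finset.univ (α := (Fin K × Fin K) ⊕ (Fin K × Fin K)),
        ¬ (probSimplex E ⊆
          ((Sum.elim (fun p => affineSpan ℝ (insert x (ApSub L p : Set (Fin E → ℝ))))
            (fun p => affineSpan ℝ (insert y (ApSub L p : Set (Fin E → ℝ)))) q :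
              AffineSubspace ℝ (Fin E → ℝ)) : Set (Fin E → ℝ))) := by
      intro q _ hsub
      rcases q with p | p
      · simp only [Sum.elim_inl] at hsub
        have hlow : E - 1 ≤ Module.finrank ℝ
            (affineSpan ℝ (insert x (ApSub L p : Set (Fin E → ℝ)))).direction := by
          rw [← finrank_ker_sumLM hE]
          refine Submodule.finrank_mono (le_trans (ker_le_vectorSpan_simplex hE) ?_)
          have := AffineSubspace.direction_le (affineSpan_le.mpr hsub)
          rwa [direction_affineSpan] at this
        have := hins x p
        omega
      · simp only [Sum.elim_inr] at hsub
        have hlow : E - 1 ≤ Module.finrank ℝ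
            (affineSpan ℝ (insert y (ApSub L p : Set (Fin E → ℝ)))).direction := by
          rw [← finrank_ker_sumLM hE]
          refine Submodule.finrank_mono (le_trans (ker_le_vectorSpan_simplex hE) ?_)
          have := AffineSubspace.direction_le (affineSpan_le.mpr hsub)
          rwa [direction_affineSpan] at this
        have := hins y p
        omega
    obtain ⟨z, hzΔ, hzav⟩ := exists_avoid probSimplex_convex (probSimplex_nonempty hE)
      Finset.univ _ hΔnotsub
    have hseg1 : ∀ (t : ℝ) (p : Fin K × Fin K), AffineMap.lineMap x z t ∉ ApSub L p := by
      intro t p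
      refine seg_avoid (hxav p (Finset.mem_univ p)) ?_ t
      have := hzav (Sum.inl p) (Finset.mem_univ _)
      simpa using this
    have hseg2 : ∀ (t : ℝ) (p : Fin K × Fin K), AffineMap.lineMap y z t ∉ ApSub L p := by
      intro t p
      refine seg_avoid (hyav p (Finset.mem_univ p)) ?_ t
      have := hzav (Sum.inr p) (Finset.mem_univ _)
      simpa using this
    have step1 := seg_step hK hE hxa.1 hzΔ
      (fun t _ c d hc hd h1 h2 => hgoodAt _ (fun p => hseg1 t p) c d hc hd h1 h2)
      ⟨a, hPa, hxa, GO_of_eq rfl⟩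
    have step2 := seg_step hK hE hzΔ hyb.1
      (fun t _ c d hc hd h1 h2 => by
        rw [show AffineMap.lineMap z y t = AffineMap.lineMap y z (1 - t) from
          (AffineMap.lineMap_apply_one_sub y z t).symm] at h1 h2
        exact hgoodAt _ (fun p => hseg2 (1 - t) p) c d hc hd h1 h2)
      step1
    obtain ⟨c, hc, hcy, hGO⟩ := step2
    exact GO_trans hGO
      (hgoodAt y (fun p => hyav p (Finset.mem_univ p)) c b hc hPb hcy hyb)
end
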